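/- If the ULA antenna spacing satisfies 0 < Δr ≤ 1/2 and N_a ≥ 2, then for all θ_i, θ_j in the open interval (−π/2, π/2), the angular similarity attains its maximum only on the diagonal: ā(θ_i, θ_j) = 1 if and only if θ_i = θ_j. -/

import Mathlib

open Real

/-- ULA steering vector: `a(θ)_n = (1/√N_a) · exp(2πi·Δr·(n−1)·sin θ)` for `n = 1,…,N_a`,
indexed here by `n : Fin Na` (so `(n : ℕ) = n - 1`). -/
noncomputable def ulaSteer (Δr : ℝ) (Na : ℕ) (θ : ℝ) (n : Fin Na) : ℂ :=
  ((1 / Real.sqrt Na : ℝ) : ℂ) *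
    Complex.exp (((2 * π * Δr * ((n : ℕ) : ℝ) * Real.sin θ : ℝ) : ℂ) * Complex.I)

/-- Angular similarity term `ā(θ_i, θ_j) = |⟨a(θ_i), a(θ_j)⟩|`. -/
noncomputable def abar (Δr : ℝ) (Na : ℕ) (θi θj : ℝ) : ℝ :=
  ‖∑ n : Fin Na, (starRingEnd ℂ) (ulaSteer Δr Na θi n) * ulaSteer Δr Na θj n‖

/-- Dirichlet kernel `D_N(x) = sin(x/2) / (N · sin(x/(2N)))`. -/
noncomputable def dirichlet (N : ℕ) (x : ℝ) : ℝ :=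
  Real.sin (x / 2) / ((N : ℝ) * Real.sin (x / (2 * N)))

/-- if `0 < Δr ≤ 1/2` and `N_a ≥ 2`, then for all
`θ_i, θ_j ∈ (−π/2, π/2)`, `ā(θ_i, θ_j) = 1` iff `θ_i = θ_j`. -/
lemma ula_term_eq (Δr : ℝ) (Na : ℕ) (hNa : 2 ≤ Na) (θi θj : ℝ) (n : Fin Na) :
    (starRingEnd ℂ) (ulaSteer Δr Na θi n) * ulaSteer Δr Na θj n
      = ((Na : ℂ))⁻¹ * (Complex.exp (((2 * π * Δr * (Real.sin θj - Real.sin θi) : ℝ) : ℂ) * Complex.I)) ^ (n : ℕ) := by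
  have hNa0 : (0:ℝ) < Na := by exact_mod_cast Nat.lt_of_lt_of_le two_pos hNa
  rw [← Complex.exp_nat_mul]
  unfold ulaSteer
  rw [map_mul, Complex.conj_ofReal, ← Complex.exp_conj]
  rw [mul_mul_mul_comm, ← Complex.exp_add]
  have h1 : ((1 / Real.sqrt Na : ℝ) : ℂ) * ((1 / Real.sqrt Na : ℝ) : ℂ) = ((Na:ℂ))⁻¹ := by
    have h2 : (1 / Real.sqrt Na) * (1 / Real.sqrt Na) = (Na:ℝ)⁻¹ := by
      rw [div_mul_div_comm, Real.mul_self_sqrt hNa0.le]; norm_num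
    rw [← Complex.ofReal_mul, h2, Complex.ofReal_inv, Complex.ofReal_natCast]
  rw [h1]
  congr 1
  rw [map_mul, Complex.conj_ofReal, Complex.conj_I]
  push_cast
  ring

lemma abs_one_add_lt (z : ℂ) (hz : ‖z‖ = 1) (hne : z ≠ 1) :
    ‖1 + z‖ < 2 := by
  have hre : z.re < 1 := by
    rcases lt_or_eq_of_le (Complex.re_le_norm z) with h | h
    · linarith [hz ▸ h]
    · exfalso
      apply hne
      have hre1 : z.re = 1 := by rw [h, hz]
      have hnsq : Complex.normSq z = 1 := by
        rw [← Complex.sq_norm, hz]; norm_num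
      have him : z.im = 0 := by
        have := Complex.normSq_apply z
        nlinarith [this, hnsq, hre1]
      exact Complex.ext hre1 him
  have hsq : ‖1 + z‖ ^ 2 = 2 + 2 * z.re := by
    rw [Complex.sq_norm, Complex.normSq_add]
    simp [Complex.normSq_one, ← Complex.sq_norm z, hz]
    norm_num
  nlinarith [norm_nonneg (1 + z), hsq, hre]

lemma geom_abs_lt (Na : ℕ) (hNa : 2 ≤ Na) (z : ℂ) (hz : ‖z‖ = 1) (hne : z ≠ 1) :
    ‖∑ n ∈ Finset.range Na, z ^ n‖ < Na := by
  have hsplit : ∑ n ∈ Finset.range Na, z ^ n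
      = (1 + z) + ∑ n ∈ Finset.Ico 2 Na, z ^ n := by
    rw [Finset.range_eq_Ico, ← Finset.sum_Ico_consecutive _ (Nat.zero_le 2) hNa]
    congr 1
    simp [Finset.sum_Ico_eq_sum_range]
    ring
  rw [hsplit]
  calc ‖(1 + z) + ∑ n ∈ Finset.Ico 2 Na, z ^ n‖
      ≤ ‖1 + z‖ + ‖∑ n ∈ Finset.Ico 2 Na, z ^ n‖ :=
        norm_add_le _ _
    _ ≤ ‖1 + z‖ + ∑ n ∈ Finset.Ico 2 Na, ‖z ^ n‖ := by
        gcongr; exact norm_sum_le _ _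
    _ = ‖1 + z‖ + ((Na : ℝ) - 2) := by
        congr 1
        simp only [norm_pow, hz, one_pow]
        rw [Finset.sum_const, Nat.card_Ico, nsmul_eq_mul, mul_one]
        push_cast [Nat.cast_sub hNa]
        ring
    _ < 2 + ((Na:ℝ) - 2) := by
        have := abs_one_add_lt z hz hne
        linarith
    _ = Na := by ring

lemma abs_sin_lt_one {θ : ℝ} (h : θ ∈ Set.Ioo (-(π / 2)) (π / 2)) : |Real.sin θ| < 1 := by
  have hπ := Real.pi_pos
  rw [abs_lt]
  constructor
  · have := Real.strictMonoOn_sin (Set.mem_Icc.mpr ⟨le_refl _, by linarith⟩)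
      (Set.mem_Icc.mpr ⟨h.1.le, h.2.le⟩) h.1
    simpa using this
  · have := Real.strictMonoOn_sin (Set.mem_Icc.mpr ⟨h.1.le, h.2.le⟩)
      (Set.mem_Icc.mpr ⟨by linarith, le_refl _⟩) h.2
    simpa using this

theorem ula_no_ambiguity_half_wavelength (Na : ℕ) (hNa : 2 ≤ Na)
    (Δr : ℝ) (hΔr : 0 < Δr) (hΔr' : Δr ≤ 1 / 2)
    (θi θj : ℝ) (hθi : θi ∈ Set.Ioo (-(π / 2)) (π / 2))
    (hθj : θj ∈ Set.Ioo (-(π / 2)) (π / 2)) :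
    abar Δr Na θi θj = 1 ↔ θi = θj := by
  have hNa0 : (0:ℝ) < Na := by exact_mod_cast Nat.lt_of_lt_of_le two_pos hNa
  set ω : ℝ := 2 * π * Δr * (Real.sin θj - Real.sin θi) with hωdef
  set z : ℂ := Complex.exp ((ω : ℂ) * Complex.I) with hzdef
  have habar : abar Δr Na θi θj
      = (Na : ℝ)⁻¹ * ‖∑ n ∈ Finset.range Na, z ^ n‖ := by
    unfold abar
    have hterm : ∀ n : Fin Na, (starRingEnd ℂ) (ulaSteer Δr Na θi n) * ulaSteer Δr Na θj n
        = ((Na : ℂ))⁻¹ * z ^ (n : ℕ) := fun n => ula_term_eq Δr Na hNa θi θj n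
    rw [Finset.sum_congr rfl (fun n _ => hterm n), ← Finset.mul_sum, norm_mul]
    rw [Fin.sum_univ_eq_sum_range (fun n => z ^ n) Na]
    congr 1
    simp [map_inv₀]
  constructor
  · intro h1
    by_contra hne
    have hzabs : ‖z‖ = 1 := by
      rw [hzdef, Complex.norm_exp]
      simp
    have hz1 : z = 1 := by
      by_contra hz1
      have hlt := geom_abs_lt Na hNa z hzabs hz1
      rw [habar] at h1
      have hlt2 : (Na:ℝ)⁻¹ * ‖∑ n ∈ Finset.range Na, z ^ n‖ < (Na:ℝ)⁻¹ * Na :=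
        mul_lt_mul_of_pos_left hlt (by positivity)
      rw [inv_mul_cancel₀ hNa0.ne'] at hlt2
      linarith
    rw [hzdef, Complex.exp_eq_one_iff] at hz1
    obtain ⟨k, hk⟩ := hz1
    have hc : (ω : ℂ) = (k : ℂ) * (2 * (π : ℂ)) :=
      mul_right_cancel₀ Complex.I_ne_zero (by rw [hk]; ring)
    have hc2 : ((ω : ℝ) : ℂ) = ((2 * π * (k : ℝ) : ℝ) : ℂ) := by
      rw [hc]; push_cast; ring
    have hωk : ω = 2 * π * (k : ℝ) := Complex.ofReal_injective hc2
    have hsi := abs_sin_lt_one hθi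
    have hsj := abs_sin_lt_one hθj
    have hπ := Real.pi_pos
    have hωbound : |ω| < 2 * π := by
      rw [hωdef, abs_mul, abs_of_pos (show (0:ℝ) < 2 * π * Δr by positivity)]
      have h3 : |Real.sin θj - Real.sin θi| < 2 := by
        calc |Real.sin θj - Real.sin θi| ≤ |Real.sin θj| + |Real.sin θi| := abs_sub _ _
          _ < 2 := by linarith
      calc 2 * π * Δr * |Real.sin θj - Real.sin θi|
          = (2 * Δr) * (π * |Real.sin θj - Real.sin θi|) := by ring
        _ ≤ 1 * (π * |Real.sin θj - Real.sin θi|) :=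
            mul_le_mul_of_nonneg_right (by linarith) (by positivity)
        _ = π * |Real.sin θj - Real.sin θi| := by ring
        _ < π * 2 := mul_lt_mul_of_pos_left h3 hπ
        _ = 2 * π := by ring
    have hk0 : k = 0 := by
      rw [hωk, abs_mul, abs_of_pos (show (0:ℝ) < 2 * π by positivity)] at hωbound
      have hkr : |(k : ℝ)| < 1 := by nlinarith [abs_nonneg (k : ℝ)]
      have hk1 : |k| < 1 := by exact_mod_cast hkr
      rw [abs_lt] at hk1
      omega
    have h0 : ω = 0 := by rw [hωk, hk0]; norm_num
    have hsin : Real.sin θi = Real.sin θj := by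
      have h2 : 2 * π * Δr * (Real.sin θj - Real.sin θi) = 0 := by rw [← hωdef]; exact h0
      have hne0 : 2 * π * Δr ≠ 0 := by positivity
      have := (mul_eq_zero.mp h2).resolve_left hne0
      linarith
    exact hne (Real.injOn_sin (Set.mem_Icc.mpr ⟨hθi.1.le, hθi.2.le⟩)
      (Set.mem_Icc.mpr ⟨hθj.1.le, hθj.2.le⟩) hsin)
  · intro h
    subst h
    have hω0 : ω = 0 := by rw [hωdef]; ring
    have hz1 : z = 1 := by rw [hzdef, hω0]; simp
    rw [habar, hz1]
    simp [hNa0.ne']
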